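/- If f: [-1,1] → [-1,1] is a C³ diffeomorphism fixing ±1 with negative Schwarzian derivative, and ν is an ergodic invariant measure for the driven skew product with fibre maps f_ω, then the sum of the normal Lyapunov exponents at the two constant invariant graphs is negative: λ_ν(φ⁻) + λ_ν(φ⁺) < 0. -/

import Mathlib

open MeasureTheory Set

/-- Schwarzian derivative `Sf = f'''/f' - (3/2) (f''/f')²`. -/
noncomputable def schwarzian (f : ℝ → ℝ) (x : ℝ) : ℝ :=
  iteratedDeriv 3 f x / deriv f x - (3 / 2) * (iteratedDeriv 2 f x / deriv f x) ^ 2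

set_option maxHeartbeats 1000000 in
lemma key (g : ℝ → ℝ) (hC3 : ContDiff ℝ 3 g) (hfm : g (-1) = -1) (hfp : g 1 = 1)
    (hd : ∀ x ∈ Icc (-1:ℝ) 1, 0 < deriv g x) (hS : ∀ x ∈ Icc (-1:ℝ) 1, schwarzian g x < 0) :
    Real.log (deriv g (-1)) + Real.log (deriv g 1) < 0 := by
  set d1 := deriv g with hd1def
  set d2 := deriv d1 with hd2def
  set d3 := deriv d2 with hd3def
  -- smoothness
  have hg3 : ContDiff ℝ ((0 + 3 : ℕ) : ℕ) g := by exact_mod_cast hC3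
  have hg3' : ContDiff ℝ ((1 + 2 : ℕ) : ℕ) g := by exact_mod_cast hC3
  have hg3'' : ContDiff ℝ ((2 + 1 : ℕ) : ℕ) g := by exact_mod_cast hC3
  have hd1C : ContDiff ℝ 2 d1 := by
    have := ContDiff.iterate_deriv' 2 1 hg3''
    simpa [Function.iterate_succ, Function.comp] using this
  have hd2C : ContDiff ℝ 1 d2 := by
    have := ContDiff.iterate_deriv' 1 2 hg3'
    simpa [Function.iterate_succ, Function.comp, hd1def] using this
  have hd3cont : Continuous d3 := by
    have := ContDiff.iterate_deriv' 0 3 hg3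
    have h0 : ContDiff ℝ 0 d3 := by
      simpa [Function.iterate_succ, Function.comp, hd1def, hd2def] using this
    exact h0.continuous
  have hd1cont : Continuous d1 := hd1C.continuous
  have hd2cont : Continuous d2 := hd2C.continuous
  have hd1diff : Differentiable ℝ d1 := hd1C.differentiable (by norm_num)
  have hd2diff : Differentiable ℝ d2 := hd2C.differentiable (by norm_num)
  -- iterated derivs
  have hiter2 : ∀ x, iteratedDeriv 2 g x = d2 x := by
    intro x
    rw [iteratedDeriv_succ, iteratedDeriv_one]
  have hiter3 : ∀ x, iteratedDeriv 3 g x = d3 x := by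
    intro x
    rw [iteratedDeriv_succ, show (2:ℕ) = 1 + 1 from rfl, iteratedDeriv_succ, iteratedDeriv_one]
  -- open set of positivity
  set U : Set ℝ := {x | 0 < d1 x} with hUdef
  have hUopen : IsOpen U := isOpen_lt continuous_const hd1cont
  have hIccU : Icc (-1:ℝ) 1 ⊆ U := fun x hx => hd x hx
  -- v and its derivatives
  set v : ℝ → ℝ := fun x => d1 x ^ (-(1/2) : ℝ) with hvdef
  set w : ℝ → ℝ := fun x => (-(1/2) : ℝ) * d1 x ^ (-(1/2) - 1 : ℝ) * d2 x with hwdef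
  have hvderiv : ∀ x ∈ U, HasDerivAt v (w x) x := by
    intro x hx
    have hxpos : 0 < d1 x := hx
    have h1 : HasDerivAt d1 (d2 x) x := (hd1diff x).hasDerivAt
    have h2 : HasDerivAt (fun y : ℝ => y ^ (-(1/2) : ℝ))
        ((-(1/2) : ℝ) * d1 x ^ (-(1/2) - 1 : ℝ)) (d1 x) :=
      Real.hasDerivAt_rpow_const (Or.inl hxpos.ne')
    have := h2.comp x h1
    simpa [hvdef, hwdef, Function.comp_def, mul_comm, mul_assoc, mul_left_comm] using this
  have hderiv_v_eq : ∀ x ∈ U, deriv v x = w x := fun x hx => (hvderiv x hx).deriv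
  -- second derivative of v
  have hwderiv : ∀ x ∈ U, HasDerivAt w
      ((-(1/2) : ℝ) * ((-(1/2) - 1 : ℝ) * d1 x ^ (-(1/2) - 1 - 1 : ℝ) * d2 x) * d2 x
        + (-(1/2) : ℝ) * d1 x ^ (-(1/2) - 1 : ℝ) * d3 x) x := by
    intro x hx
    have hxpos : 0 < d1 x := hx
    have h1 : HasDerivAt d1 (d2 x) x := (hd1diff x).hasDerivAt
    have h2 : HasDerivAt (fun y : ℝ => y ^ (-(1/2) - 1 : ℝ))
        ((-(1/2) - 1 : ℝ) * d1 x ^ (-(1/2) - 1 - 1 : ℝ)) (d1 x) :=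
      Real.hasDerivAt_rpow_const (Or.inl hxpos.ne')
    have h3 : HasDerivAt (fun y => d1 y ^ (-(1/2) - 1 : ℝ))
        ((-(1/2) - 1 : ℝ) * d1 x ^ (-(1/2) - 1 - 1 : ℝ) * d2 x) x := by
      simpa [Function.comp_def, mul_comm, mul_assoc, mul_left_comm] using h2.comp x h1
    have h4 : HasDerivAt d2 (d3 x) x := (hd2diff x).hasDerivAt
    have h5 := ((h3.const_mul ((-(1/2)) : ℝ)).mul h4)
    simpa [hwdef, Pi.mul_def, mul_comm, mul_assoc, mul_left_comm, add_comm] using h5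
  -- second derivative of v is positive on the interior
  have hv2pos : ∀ x ∈ Ioo (-1:ℝ) 1, 0 < deriv (deriv v) x := by
    intro x hx
    have hxIcc : x ∈ Icc (-1:ℝ) 1 := Ioo_subset_Icc_self hx
    have hxU : x ∈ U := hIccU hxIcc
    have ht : 0 < d1 x := hd x hxIcc
    have hU_nhds : U ∈ nhds x := hUopen.mem_nhds hxU
    have heq : deriv v =ᶠ[nhds x] w := Filter.eventuallyEq_of_mem hU_nhds hderiv_v_eq
    rw [heq.deriv_eq, (hwderiv x hxU).deriv]
    have hS' := hS x hxIcc
    rw [schwarzian, hiter3, hiter2, ← hd1def] at hS'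
    have h1 : d1 x ^ (-(1/2) - 1 : ℝ) = d1 x ^ (-(1/2):ℝ) / d1 x :=
      Real.rpow_sub_one ht.ne' _
    have h2 : d1 x ^ (-(1/2) - 1 - 1 : ℝ) = d1 x ^ (-(1/2):ℝ) / d1 x / d1 x := by
      rw [Real.rpow_sub_one ht.ne', h1]
    have hrpos : 0 < d1 x ^ (-(1/2):ℝ) := Real.rpow_pos_of_pos ht _
    have hEeq : (-(1/2) : ℝ) * ((-(1/2) - 1 : ℝ) * d1 x ^ (-(1/2) - 1 - 1 : ℝ) * d2 x) * d2 x
          + (-(1/2) : ℝ) * d1 x ^ (-(1/2) - 1 : ℝ) * d3 x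
        = -(1/2) * (d1 x ^ (-(1/2):ℝ)) * (d3 x / d1 x - 3/2 * (d2 x / d1 x)^2) := by
      rw [h1, h2]; field_simp; ring
    rw [hEeq]
    have : -(1/2) * (d1 x ^ (-(1/2):ℝ)) < 0 := by nlinarith
    exact mul_pos_of_neg_of_neg this hS'
  -- v is strictly convex on [-1,1]
  have hvcont : ContinuousOn v (Icc (-1:ℝ) 1) :=
    hd1cont.continuousOn.rpow_const (fun x hx => Or.inl (hd x hx).ne')
  have hconv : StrictConvexOn ℝ (Icc (-1:ℝ) 1) v := by
    apply strictConvexOn_of_deriv2_pos (convex_Icc _ _) hvcont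
    intro x hx
    rw [interior_Icc] at hx
    have : deriv^[2] v x = deriv (deriv v) x := by
      simp [Function.iterate_succ, Function.comp]
    rw [this]
    exact hv2pos x hx
  have hm1 : (-1:ℝ) ∈ Icc (-1:ℝ) 1 := by norm_num
  have hp1 : (1:ℝ) ∈ Icc (-1:ℝ) 1 := by norm_num
  set A := v (-1) with hAdef
  set B := v 1 with hBdef
  have hA : 0 < A := Real.rpow_pos_of_pos (hd _ hm1) _
  have hB : 0 < B := Real.rpow_pos_of_pos (hd _ hp1) _
  set L : ℝ → ℝ := fun z => (A+B)/2 + z*((B-A)/2) with hLdef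
  have hLm1 : L (-1) = A := by simp [hLdef]; ring
  have hLp1 : L 1 = B := by simp [hLdef]; ring
  -- chord inequality
  have hchord : ∀ z ∈ Ioo (-1:ℝ) 1, v z < L z := by
    intro z hz
    have ha : 0 < (1-z)/2 := by linarith [hz.2]
    have hb : 0 < (1+z)/2 := by linarith [hz.1]
    have hab : (1-z)/2 + (1+z)/2 = 1 := by ring
    have := hconv.2 hm1 hp1 (by norm_num) ha hb hab
    have hzeq : ((1-z)/2) • (-1:ℝ) + ((1+z)/2) • (1:ℝ) = z := by
      simp [smul_eq_mul]; ring
    rw [hzeq] at this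
    calc v z < (1-z)/2 * A + (1+z)/2 * B := this
      _ = L z := by rw [hLdef]; ring
  -- relation d1 = (v)⁻²
  have hd1v : ∀ x ∈ Icc (-1:ℝ) 1, d1 x = (v x ^ 2)⁻¹ := by
    intro x hx
    have ht : 0 < d1 x := hd x hx
    have : v x ^ 2 = d1 x ^ (-1:ℝ) := by
      rw [hvdef]; rw [sq, ← Real.rpow_add ht]; norm_num
    rw [this, Real.rpow_neg_one, inv_inv]
  have hvpos : ∀ x ∈ Icc (-1:ℝ) 1, 0 < v x :=
    fun x hx => Real.rpow_pos_of_pos (hd x hx) _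
  -- L is positive on Icc
  have hLpos : ∀ z ∈ Icc (-1:ℝ) 1, 0 < L z := by
    intro z hz
    rcases eq_or_lt_of_le hz.2 with h|h
    · rw [h, hLp1]; exact hB
    · calc (0:ℝ) < (1-z)/2 * A + (1+z)/2 * B := by
            have ha : 0 < (1-z)/2 := by linarith
            have hb : 0 ≤ (1+z)/2 := by linarith [hz.1]
            positivity
        _ = L z := by rw [hLdef]; ring
  -- ∫ d1 = 2
  have hint1 : (∫ x in (-1:ℝ)..1, d1 x) = 2 := by
    rw [hd1def, intervalIntegral.integral_deriv_eq_sub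
      (fun x _ => (hC3.differentiable (by norm_num)) x)
      ((hd1cont.intervalIntegrable _ _))]
    rw [hfp, hfm]; norm_num
  -- ∫ (L z ^ 2)⁻¹ = 2/(A*B)
  have hint2 : (∫ z in (-1:ℝ)..1, ((L z)^2)⁻¹) = 2/(A*B) := by
    rcases eq_or_ne A B with hAB|hAB
    · have hLconst : ∀ z, L z = A := by intro z; rw [hLdef, ← hAB]; ring
      simp only [hLconst]
      rw [intervalIntegral.integral_const]
      rw [← hAB]; field_simp; rw [smul_eq_mul, one_div, mul_left_comm, mul_inv_cancel₀ (pow_ne_zero 2 hA.ne')]; ring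
    · have hBA : B - A ≠ 0 := sub_ne_zero.mpr (Ne.symm hAB)
      set F : ℝ → ℝ := fun z => -((2/(B-A)) * (L z)⁻¹) with hFdef
      have hF : ∀ x ∈ uIcc (-1:ℝ) 1, HasDerivAt F (((L x)^2)⁻¹) x := by
        intro x hx
        rw [uIcc_of_le (by norm_num : (-1:ℝ) ≤ 1)] at hx
        have hLx : L x ≠ 0 := (hLpos x hx).ne'
        have hL : HasDerivAt L ((B-A)/2) x := by
          have := ((hasDerivAt_id x).mul_const ((B-A)/2)).const_add ((A+B)/2)
          simpa [hLdef] using this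
        have hinv := hL.inv hLx
        have := (hinv.const_mul ((2:ℝ)/(B-A))).neg
        refine this.congr_deriv ?_
        field_simp
      have hcontL2 : ContinuousOn (fun z => ((L z)^2)⁻¹) (Icc (-1:ℝ) 1) := by
        apply ContinuousOn.inv₀
        · exact ((continuous_const.add (continuous_id.mul continuous_const)).pow 2).continuousOn
        · intro z hz; exact pow_ne_zero 2 (hLpos z hz).ne'
      rw [intervalIntegral.integral_eq_sub_of_hasDerivAt hF
        (hcontL2.intervalIntegrable_of_Icc (by norm_num))]
      rw [hFdef]
      simp only [hLp1, hLm1]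
      field_simp
      ring
  -- strict comparison of integrals
  have hlt : (∫ z in (-1:ℝ)..1, ((L z)^2)⁻¹) < ∫ x in (-1:ℝ)..1, d1 x := by
    apply intervalIntegral.integral_lt_integral_of_continuousOn_of_le_of_exists_lt
      (by norm_num : (-1:ℝ) < 1)
    · apply ContinuousOn.inv₀
      · exact ((continuous_const.add (continuous_id.mul continuous_const)).pow 2).continuousOn
      · intro z hz; exact pow_ne_zero 2 (hLpos z hz).ne'
    · exact hd1cont.continuousOn
    · intro z hz
      rcases eq_or_lt_of_le hz.2 with h|h
      · rw [h, hLp1, hd1v 1 hp1]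
      · have hzo : z ∈ Ioo (-1:ℝ) 1 := ⟨hz.1, h⟩
        have hzIcc : z ∈ Icc (-1:ℝ) 1 := Ioo_subset_Icc_self hzo
        rw [hd1v z hzIcc]
        have h1 : 0 < v z := hvpos z hzIcc
        have h2 : v z < L z := hchord z hzo
        have : v z ^ 2 < L z ^ 2 := by nlinarith
        exact le_of_lt (by
          apply inv_strictAnti₀ (by positivity) this)
    · refine ⟨0, by norm_num, ?_⟩
      have h0 : (0:ℝ) ∈ Ioo (-1:ℝ) 1 := by norm_num
      have h0I : (0:ℝ) ∈ Icc (-1:ℝ) 1 := by norm_num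
      rw [hd1v 0 h0I]
      have h1 : 0 < v 0 := hvpos 0 h0I
      have h2 : v 0 < L 0 := hchord 0 h0
      have : v 0 ^ 2 < L 0 ^ 2 := by nlinarith
      exact inv_strictAnti₀ (by positivity) this
  rw [hint1, hint2] at hlt
  have hABgt : 1 < A * B := by
    rw [div_lt_iff₀ (by positivity)] at hlt
    nlinarith
  -- conclude
  have hlogpos : 0 < Real.log A + Real.log B := by
    rw [← Real.log_mul hA.ne' hB.ne']
    exact Real.log_pos hABgt
  rw [hd1v (-1) hm1, hd1v 1 hp1, Real.log_inv, Real.log_inv, Real.log_pow, Real.log_pow]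
  push_cast
  linarith

open MeasureTheory in
theorem stmt0 {Ω : Type*} [MeasurableSpace Ω] (S : Ω → Ω) (ν : Measure Ω)
    [IsProbabilityMeasure ν] (hS : Ergodic S ν)
    (f : Ω → ℝ → ℝ)
    (hmeas : Measurable fun p : Ω × ℝ => f p.1 p.2)
    (hC3 : ∀ ω, ContDiff ℝ 3 (f ω))
    (hmono : ∀ ω, StrictMonoOn (f ω) (Icc (-1) 1))
    (hbij : ∀ ω, BijOn (f ω) (Icc (-1) 1) (Icc (-1) 1))
    (hfixm : ∀ ω, f ω (-1) = -1) (hfixp : ∀ ω, f ω 1 = 1)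
    (hderiv : ∀ ω, ∀ x ∈ Icc (-1 : ℝ) 1, 0 < deriv (f ω) x)
    (hSchw : ∀ ω, ∀ x ∈ Icc (-1 : ℝ) 1, schwarzian (f ω) x < 0)
    (hintm : Integrable (fun ω => Real.log (deriv (f ω) (-1))) ν)
    (hintp : Integrable (fun ω => Real.log (deriv (f ω) 1)) ν) :
    (∫ ω, Real.log (deriv (f ω) (-1)) ∂ν) + (∫ ω, Real.log (deriv (f ω) 1) ∂ν) < 0 := by
  have hpt : ∀ ω, Real.log (deriv (f ω) (-1)) + Real.log (deriv (f ω) 1) < 0 :=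
    fun ω => key (f ω) (hC3 ω) (hfixm ω) (hfixp ω) (hderiv ω) (hSchw ω)
  rw [← integral_add hintm hintp]
  set G := fun ω => -(Real.log (deriv (f ω) (-1)) + Real.log (deriv (f ω) 1)) with hGdef
  have hGint : Integrable G ν := (hintm.add hintp).neg
  have hpos : 0 < ∫ ω, G ω ∂ν := by
    rw [integral_pos_iff_support_of_nonneg_ae
      (Filter.Eventually.of_forall fun ω => neg_nonneg.2 (hpt ω).le) hGint]
    have hsupp : Function.support G = Set.univ :=
      Set.eq_univ_of_forall fun ω => (neg_pos.2 (hpt ω)).ne'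
    rw [hsupp]
    simp
  have hneg : ∫ ω, G ω ∂ν
      = -∫ ω, (Real.log (deriv (f ω) (-1)) + Real.log (deriv (f ω) 1)) ∂ν := by
    rw [hGdef, integral_neg]
  linarith [hpos, hneg ▸ hpos]
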